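/- Let A be a commutative ring, I a set, R = A[(X_i)_{i∈I}] the polynomial ring, and 𝔞 ⊆ R a monomial ideal. Then √𝔞 = nil(R) + ⌊𝔞⌋, where nil(R) is the nilradical of R and √𝔞 is the radical of 𝔞. (Lemma 2.05 a).) -/

import Mathlib

open MvPolynomial

/-- `suppInd μ` is the characteristic function of the support of `μ`,
so that `X^(suppInd μ) = ∏_{i : μ i > 0} X i`. -/
noncomputable def suppInd {I : Type v} (μ : I →₀ ℕ) : I →₀ ℕ :=
  μ.mapRange (fun n => if n = 0 then 0 else 1) (by simp)

/-- A monomial ideal of `A[(X_i)_{i ∈ I}]` is an ideal generated by a set of monomials. -/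
def IsMonomialIdeal {A : Type u} [CommRing A] {I : Type v}
    (𝔞 : Ideal (MvPolynomial I A)) : Prop :=
  ∃ E : Set (I →₀ ℕ), 𝔞 = Ideal.span ((fun μ => monomial μ (1 : A)) '' E)

/-- `⌊𝔞⌋` is the ideal generated by the monomials `X^(suppInd μ)` for all monomials
`X^μ ∈ 𝔞`. -/
noncomputable def mvFloor {A : Type u} [CommRing A] {I : Type v}
    (𝔞 : Ideal (MvPolynomial I A)) : Ideal (MvPolynomial I A) :=
  Ideal.span {f | ∃ μ : I →₀ ℕ, monomial μ (1 : A) ∈ 𝔞 ∧ f = monomial (suppInd μ) (1 : A)}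

lemma suppInd_apply {I : Type v} (μ : I →₀ ℕ) (i : I) :
    suppInd μ i = if μ i = 0 then 0 else 1 := Finsupp.mapRange_apply

lemma suppInd_le_self_of_nsmul_le {I : Type v} {μ d : I →₀ ℕ} {m : ℕ} (h : μ ≤ m • d) :
    suppInd μ ≤ d := by
  intro i
  rw [suppInd_apply]
  split_ifs with h0
  · exact Nat.zero_le _
  · have := h i
    rw [Finsupp.smul_apply] at this
    rcases Nat.eq_zero_or_pos (d i) with hd | hd
    · simp [hd] at this; omega
    · omega

/-- Leading-term lemma for powers: if `d` dominates the support of `f` in the lex order,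
then the coefficient of `n • d` in `f ^ n` is `(coeff d f) ^ n`, and `n • d` dominates
the support of `f ^ n`. -/
lemma coeff_pow_lexMax {I : Type v} [LinearOrder I] {A : Type u} [CommRing A]
    (f : MvPolynomial I A) (d : I →₀ ℕ)
    (hd : ∀ ν ∈ f.support, toLex ν ≤ toLex d) (n : ℕ) :
    (∀ ν ∈ (f ^ n).support, toLex ν ≤ toLex (n • d)) ∧
      coeff (n • d) (f ^ n) = (coeff d f) ^ n := by
  classical
  induction n with
  | zero =>
    constructor
    · intro ν hν
      rw [pow_zero, mem_support_iff, coeff_one] at hν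
      have : ν = 0 := by by_contra h; simp [Ne.symm h] at hν
      simp [this]
    · simp [coeff_one]
  | succ n ih =>
    obtain ⟨ih1, ih2⟩ := ih
    have hsmul : (n + 1) • d = n • d + d := succ_nsmul d n
    constructor
    · intro ν hν
      rw [pow_succ] at hν
      obtain ⟨u, hu, v, hv, rfl⟩ := Finset.mem_add.mp (support_mul _ _ hν)
      calc toLex (u + v) = toLex u + toLex v := rfl
        _ ≤ toLex (n • d) + toLex d := add_le_add (ih1 u hu) (hd v hv)
        _ = toLex ((n + 1) • d) := by rw [hsmul]; rfl
    · rw [pow_succ, coeff_mul]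
      rw [Finset.sum_eq_single_of_mem (n • d, d)]
      · rw [ih2, pow_succ]
      · rw [Finset.HasAntidiagonal.mem_antidiagonal]; exact hsmul.symm
      · rintro ⟨u, v⟩ hb hne
        rw [Finset.HasAntidiagonal.mem_antidiagonal] at hb
        by_contra hzero
        have hu : u ∈ (f ^ n).support := by
          rw [mem_support_iff]; intro h0; apply hzero; simp [h0]
        have hv : v ∈ f.support := by
          rw [mem_support_iff]; intro h0; apply hzero; simp [h0]
        have h1 : toLex u ≤ toLex (n • d) := ih1 u hu
        have h2 : toLex v ≤ toLex d := hd v hv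
        have hsum : toLex u + toLex v = toLex (n • d) + toLex d := by
          have : toLex (u + v) = toLex (n • d + d) := by rw [hb, hsmul]
          exact this
        have hue : toLex u = toLex (n • d) := by
          refine le_antisymm h1 ?_
          have : toLex (n • d) + toLex d ≤ toLex u + toLex d := by
            rw [← hsum]; exact add_le_add le_rfl h2
          exact le_of_add_le_add_right this
        have hu' : u = n • d := toLex.injective hue
        have hv' : v = d := by
          have : u + v = n • d + d := by rw [hb, hsmul]
          rw [hu'] at this
          exact add_left_cancel this
        exact hne (by rw [hu', hv'])

theorem radical_monomialIdeal_eq_nilradical_add_floor {A : Type u} [CommRing A] {I : Type v}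
    (𝔞 : Ideal (MvPolynomial I A)) (h : IsMonomialIdeal 𝔞) :
    𝔞.radical = nilradical (MvPolynomial I A) + mvFloor 𝔞 := by
  classical
  obtain ⟨E, hE⟩ := h
  -- membership criterion in 𝔞
  have hmem : ∀ g : MvPolynomial I A, g ∈ 𝔞 ↔ ∀ ν ∈ g.support, ∃ μ ∈ E, μ ≤ ν := by
    intro g; rw [hE]; exact mem_ideal_span_monomial_image
  have hnil_le : nilradical (MvPolynomial I A) ≤ 𝔞.radical := by
    intro x hx
    obtain ⟨n, hn⟩ := hx
    exact Ideal.mem_radical_iff.mpr ⟨n, by rw [hn]; exact zero_mem _⟩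
  have hfloor_le : mvFloor 𝔞 ≤ 𝔞.radical := by
    rw [mvFloor, Ideal.span_le]
    rintro _ ⟨μ, hμ, rfl⟩
    set k := (μ.sum fun _ m => m) + 1 with hk
    have hle : μ ≤ k • suppInd μ := by
      intro i
      rw [Finsupp.smul_apply, suppInd_apply]
      rcases Nat.eq_zero_or_pos (μ i) with h0 | h0
      · simp [h0]
      · have hi : i ∈ μ.support := Finsupp.mem_support_iff.mpr h0.ne'
        have hsum : μ i ≤ μ.sum fun _ m => m :=
          Finset.single_le_sum (fun j _ => Nat.zero_le (μ j)) hi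
        rw [if_neg h0.ne']
        simp only [smul_eq_mul, mul_one]
        omega
    refine Ideal.mem_radical_iff.mpr ⟨k, ?_⟩
    have : (monomial (suppInd μ) (1 : A)) ^ k
        = monomial μ 1 * monomial (k • suppInd μ - μ) 1 := by
      rw [monomial_pow, one_pow, monomial_mul, one_mul, add_tsub_cancel_of_le hle]
    rw [this]
    exact Ideal.mul_mem_right _ _ hμ
  refine le_antisymm ?_ (by
    rw [Submodule.add_eq_sup, sup_le_iff]; exact ⟨hnil_le, hfloor_le⟩)
  -- hard direction
  letI : LinearOrder I := IsWellOrder.linearOrder WellOrderingRel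
  suffices H : ∀ N : ℕ, ∀ f : MvPolynomial I A, f.support.card ≤ N → f ∈ 𝔞.radical →
      f ∈ nilradical (MvPolynomial I A) + mvFloor 𝔞 by
    intro f hf
    exact H f.support.card f le_rfl hf
  intro N
  induction N with
  | zero =>
    intro f hcard _
    have : f = 0 := by
      rwa [Nat.le_zero, Finset.card_eq_zero, support_eq_empty] at hcard
    rw [this]; exact zero_mem _
  | succ N ih =>
    intro f hcard hf
    by_cases hf0 : f = 0
    · rw [hf0]; exact zero_mem _
    have hne : f.support.Nonempty := support_nonempty.mpr hf0
    obtain ⟨d, hd, hmax⟩ := Finset.exists_max_image f.support (fun ν => toLex ν) hne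
    set c := coeff d f with hc
    have hcne : c ≠ 0 := mem_support_iff.mp hd
    obtain ⟨n, hn⟩ := Ideal.mem_radical_iff.mp hf
    have hn' : f ^ (n + 1) ∈ 𝔞 := by rw [pow_succ]; exact Ideal.mul_mem_right _ _ hn
    set m := n + 1 with hm
    obtain ⟨hsupp, hcoeff⟩ := coeff_pow_lexMax f d hmax m
    -- the leading term t
    have key : ∃ t : MvPolynomial I A,
        t ∈ nilradical (MvPolynomial I A) + mvFloor 𝔞 ∧ t ∈ 𝔞.radical ∧
        t = monomial d c := by
      by_cases hcm : c ^ m = 0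
      · refine ⟨monomial d c, ?_, ?_, rfl⟩
        · have : IsNilpotent (monomial d c) :=
            ⟨m, by rw [monomial_pow, hcm, monomial_zero]⟩
          exact Submodule.mem_sup_left this
        · exact hnil_le (⟨m, by rw [monomial_pow, hcm, monomial_zero]⟩ :
            IsNilpotent (monomial d c))
      · have hmem' : m • d ∈ (f ^ m).support := by
          rw [mem_support_iff, hcoeff]; exact hcm
        obtain ⟨μ, hμE, hμle⟩ := (hmem _).mp hn' _ hmem'
        have hμ𝔞 : monomial μ (1 : A) ∈ 𝔞 := by
          rw [hE]; exact Ideal.subset_span ⟨μ, hμE, rfl⟩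
        have hgen : monomial (suppInd μ) (1 : A) ∈ mvFloor 𝔞 :=
          Ideal.subset_span ⟨μ, hμ𝔞, rfl⟩
        have hsle : suppInd μ ≤ d := suppInd_le_self_of_nsmul_le hμle
        have ht : monomial d c ∈ mvFloor 𝔞 := by
          have : monomial d c = monomial (suppInd μ) (1 : A) * monomial (d - suppInd μ) c := by
            rw [monomial_mul, one_mul, add_tsub_cancel_of_le hsle]
          rw [this]
          exact Ideal.mul_mem_right _ _ hgen
        exact ⟨monomial d c, Submodule.mem_sup_right ht, hfloor_le ht, rfl⟩
    obtain ⟨t, htRHS, htrad, htval⟩ := key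
    have hsub : f - t ∈ 𝔞.radical := sub_mem hf htrad
    have hsupp' : (f - t).support ⊆ f.support.erase d := by
      intro ν hν
      rw [mem_support_iff, htval, coeff_sub, coeff_monomial] at hν
      rcases eq_or_ne ν d with rfl | hνd
      · simp [hc] at hν
      · rw [if_neg (Ne.symm hνd), sub_zero] at hν
        exact Finset.mem_erase.mpr ⟨hνd, mem_support_iff.mpr hν⟩
    have hcard' : (f - t).support.card ≤ N := by
      have h1 := Finset.card_le_card hsupp'
      rw [Finset.card_erase_of_mem hd] at h1
      omega
    have := ih (f - t) hcard' hsub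
    have : (f - t) + t ∈ nilradical (MvPolynomial I A) + mvFloor 𝔞 := add_mem this htRHS
    rwa [sub_add_cancel] at this
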